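/- Let d = 1, so Jac(f) = det(I − A) ∈ R, and let J_{1,n} be the ideal of R generated by the homogeneous components of positive degree of det(I − A). Then for all i, j ∈ [1,n], the entry (A^n)_{i,j} (which equals z(fern_{1,n}, μ) for the path tree fern_{1,n} with root labeled i and its single leaf labeled j) lies in J_{1,n}. -/

import Mathlib

open MvPolynomial Matrix

noncomputable section

/-- `R n` is the polynomial ring `ℚ[a_{i,j} : 1 ≤ i,j ≤ n]`. -/
abbrev JacR (n : ℕ) : Type := MvPolynomial (Fin n × Fin n) ℚ

/-- The matrix `A` with entries the indeterminates `a_{i,j}`. -/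
def Amat (n : ℕ) : Matrix (Fin n) (Fin n) (JacR n) := fun i j => X (i, j)

/-- For `d = 1` the Jacobian of `f` is `det(I - A) ∈ R`, and `J_{1,n}` is the ideal of `R`
generated by all homogeneous components of `det(I - A)` except the constant term. -/
def Jideal1 (n : ℕ) : Ideal (JacR n) :=
  Ideal.span {r : JacR n | ∃ k : ℕ, k ≠ 0 ∧ homogeneousComponent k (1 - Amat n).det = r}

/-- The "homogenization in `t`" algebra map `R → R[t]`, sending each variable `a` to `a·t`. -/
def homt (σ : Type*) : MvPolynomial σ ℚ →ₐ[ℚ] Polynomial (MvPolynomial σ ℚ) :=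
  aeval (fun s => Polynomial.C (X s) * Polynomial.X)

lemma homt_monomial {σ : Type*} (d : σ →₀ ℕ) (c : ℚ) :
    homt σ (monomial d c) = Polynomial.C (monomial d c) * Polynomial.X ^ d.degree := by
  rw [homt, aeval_monomial]
  have h1 : (d.prod fun s e => (Polynomial.C (X s : MvPolynomial σ ℚ) * Polynomial.X) ^ e)
      = Polynomial.C (d.prod fun s e => (X s : MvPolynomial σ ℚ) ^ e) * Polynomial.X ^ d.degree := by
    rw [Finsupp.prod, Finsupp.prod, Finsupp.degree_apply, ← Finset.prod_pow_eq_pow_sum]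
    simp only [mul_pow]
    rw [Finset.prod_mul_distrib, map_prod]
    simp [map_pow]
  rw [h1, monomial_eq, _root_.map_mul, Polynomial.algebraMap_apply, MvPolynomial.algebraMap_eq]
  ring

/-- The `k`-th coefficient of `homt p` is the `k`-th homogeneous component of `p`. -/
lemma coeff_homt {σ : Type*} (p : MvPolynomial σ ℚ) (k : ℕ) :
    (homt σ p).coeff k = homogeneousComponent k p := by
  induction p using MvPolynomial.induction_on' with
  | monomial d c =>
      classical
      rw [homt_monomial]
      ext e
      rw [coeff_homogeneousComponent]
      simp only [Polynomial.coeff_C_mul, Polynomial.coeff_X_pow, mul_ite, mul_one, mul_zero]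
      rw [apply_ite (coeff e)]
      simp only [coeff_monomial, coeff_zero]
      by_cases h2 : d = e
      · subst h2
        by_cases h : d.degree = k
        · simp [h]
        · rw [if_neg h, if_neg (fun hh : k = d.degree => h hh.symm)]
      · have hc : coeff e ((monomial d) c) = 0 := by
          rw [coeff_monomial, if_neg h2]
        split_ifs <;> simp [hc]
  | add p q hp hq => simp [map_add, hp, hq]

/-- `homt` sends `det(1 - A)` to the reverse characteristic polynomial of `A`. -/
lemma homt_det (n : ℕ) :
    homt (Fin n × Fin n) (1 - Amat n).det = (Amat n).charpolyRev := by
  rw [Matrix.charpolyRev]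
  rw [show homt (Fin n × Fin n) (1 - Amat n).det
      = ((1 - Amat n).map (homt (Fin n × Fin n))).det from
    RingHom.map_det (homt (Fin n × Fin n)).toRingHom (1 - Amat n)]
  congr 1
  apply Matrix.ext
  intro i j
  rw [Matrix.map_apply, Matrix.sub_apply, map_sub, Matrix.sub_apply, Matrix.smul_apply,
    Matrix.map_apply]
  congr 1
  · rcases eq_or_ne i j with h | h
    · subst h; simp
    · simp [Matrix.one_apply_ne h]
  · show homt _ (X (i, j)) = _
    rw [homt, aeval_X, smul_eq_mul, mul_comm]
    rfl

/-- for `d = 1`, every entry `(A^n)_{i,j}` (which equals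
`z(fern_{1,n}, μ)` for the path tree with root labeled `i` and leaf labeled `j`)
lies in `J_{1,n}`. -/
theorem stmt9 (n : ℕ) (hn : 1 ≤ n) (i j : Fin n) :
    (Amat n ^ n) i j ∈ Jideal1 n := by
  classical
  have hdeg : ((Amat n).charpoly).natDegree = n := by
    rw [Matrix.charpoly_natDegree_eq_dim, Fintype.card_fin]
  have hcoeff : ∀ m, m < n → (Amat n).charpoly.coeff m ∈ Jideal1 n := by
    intro m hm
    have h1 : (Amat n).charpoly.coeff m = ((Amat n).charpoly.reverse).coeff (n - m) := by
      rw [Polynomial.coeff_reverse, hdeg, Polynomial.revAt_le (by omega)]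
      congr 1; omega
    rw [h1, Matrix.reverse_charpoly, ← homt_det, coeff_homt]
    exact Ideal.subset_span ⟨n - m, by omega, rfl⟩
  have hq : ∀ k, ((Polynomial.X ^ n - (Amat n).charpoly).coeff k) ∈ Jideal1 n := by
    intro k
    rw [Polynomial.coeff_sub, Polynomial.coeff_X_pow]
    rcases lt_trichotomy k n with h | h | h
    · simpa [h.ne] using (Jideal1 n).neg_mem (hcoeff k h)
    · rw [h]
      have h2 : (Amat n).charpoly.coeff n = 1 := by
        have h3 := (Amat n).charpoly_monic.coeff_natDegree
        rwa [hdeg] at h3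
      simp [h2]
    · have h2 : (Amat n).charpoly.coeff k = 0 :=
        Polynomial.coeff_eq_zero_of_natDegree_lt (by omega)
      simp [h2, h.ne']
  have hA : (Amat n) ^ n = Polynomial.aeval (Amat n) (Polynomial.X ^ n - (Amat n).charpoly) := by
    rw [map_sub, map_pow, Polynomial.aeval_X, Matrix.aeval_self_charpoly, sub_zero]
  rw [hA, Polynomial.aeval_eq_sum_range, Matrix.sum_apply]
  exact Ideal.sum_mem _ fun k _ => by
    rw [Matrix.smul_apply, smul_eq_mul]
    exact Ideal.mul_mem_right _ _ (hq k)
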